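/- Let λ, μ > 0 with λ ≠ μ, ω = λ − μ, t > 0, and let p_k be the modified geometric pmf with parameters α(t) = μ(e^{ωt}−1)/(λe^{ωt}−μ) and β(t) = (λ/μ)α(t), assuming 0 ≤ α(t), β(t) < 1. Then the variance of this distribution equals ((λ+μ)/ω)·e^{ωt}·(e^{ωt} − 1). -/

import Mathlib

set_option maxHeartbeats 1000000

lemma aux_hasSum (β m : ℝ) (hβ : |β| < 1) :
    HasSum (fun n : ℕ => ((n : ℝ) + 1 - m) ^ 2 * β ^ n)
      (2 * (1 / (1 - β) ^ 3) + (2 * (1 - m) - 3) * (β / (1 - β) ^ 2)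
        + ((1 - m) ^ 2 - 2) * (1 / (1 - β))) := by
  have hβ' : ‖β‖ < 1 := by simpa [Real.norm_eq_abs] using hβ
  have h1 : HasSum (fun n : ℕ => (((n + 2).choose 2 : ℕ) : ℝ) * β ^ n) (1 / (1 - β) ^ 3) := by
    simpa using hasSum_choose_mul_geometric_of_norm_lt_one 2 hβ'
  have h2 : HasSum (fun n : ℕ => (n : ℝ) * β ^ n) (β / (1 - β) ^ 2) :=
    hasSum_coe_mul_geometric_of_norm_lt_one hβ'
  have h3 : HasSum (fun n : ℕ => β ^ n) (1 / (1 - β)) := by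
    simpa [one_div] using hasSum_geometric_of_norm_lt_one hβ'
  have H := ((h1.mul_left 2).add (h2.mul_left (2 * (1 - m) - 3))).add
    (h3.mul_left ((1 - m) ^ 2 - 2))
  convert H using 1
  · rfl
  funext n
  have hc : (((n + 2).choose 2 : ℕ) : ℝ) = ((n : ℝ) + 2) * ((n : ℝ) + 1) / 2 := by
    rw [Nat.choose_two_right]
    rw [Nat.cast_div (by simpa [Nat.mul_comm] using Nat.even_mul_succ_self (n+1) |>.two_dvd) (by norm_num)]
    push_cast
    ring
  rw [hc]
  ring

theorem stmt4 (lam mu t : ℝ) (hlam : 0 < lam) (hmu : 0 < mu) (hne : lam ≠ mu)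
    (ht : 0 < t)
    (α β : ℝ)
    (hα : α = mu * (Real.exp ((lam - mu) * t) - 1) /
      (lam * Real.exp ((lam - mu) * t) - mu))
    (hβ : β = (lam / mu) * α)
    (hα0 : 0 ≤ α) (hα1 : α < 1) (hβ0 : 0 ≤ β) (hβ1 : β < 1)
    (p : ℕ → ℝ)
    (hp : ∀ k, p k = if k = 0 then α else (1 - α) * (1 - β) * β ^ (k - 1)) :
    ∑' k : ℕ, ((k : ℝ) - Real.exp ((lam - mu) * t)) ^ 2 * p k =
      ((lam + mu) / (lam - mu)) * Real.exp ((lam - mu) * t) *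
        (Real.exp ((lam - mu) * t) - 1) := by
  set E := Real.exp ((lam - mu) * t) with hE
  set g : ℕ → ℝ := fun k => ((k : ℝ) - E) ^ 2 * p k with hg
  have hβabs : |β| < 1 := abs_lt.2 ⟨by linarith, hβ1⟩
  set c : ℝ := (1 - α) * (1 - β) with hc
  set S : ℝ := 2 * (1 / (1 - β) ^ 3) + (2 * (1 - E) - 3) * (β / (1 - β) ^ 2)
      + ((1 - E) ^ 2 - 2) * (1 / (1 - β)) with hS
  have Hsh : HasSum (fun n : ℕ => g (n + 1)) (c * S) := by
    have := (aux_hasSum β E hβabs).mul_left c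
    convert this using 1
    · rfl
    funext n
    simp only [hg, hp (n + 1)]
    push_cast
    ring
  have Hg : HasSum g (c * S + ∑ i ∈ Finset.range 1, g i) :=
    (hasSum_nat_add_iff 1).1 Hsh
  have hg0 : ∑ i ∈ Finset.range 1, g i = E ^ 2 * α := by
    simp [hg, hp 0]
  rw [Hg.tsum_eq, hg0]
  -- now pure algebra
  have hω : lam - mu ≠ 0 := sub_ne_zero.2 hne
  have hD : lam * E - mu ≠ 0 := by
    rcases lt_or_gt_of_ne hne with h | h
    · have hE1 : E < 1 := by
        rw [hE]
        have : (lam - mu) * t < 0 := mul_neg_of_neg_of_pos (by linarith) ht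
        calc Real.exp ((lam - mu) * t) < Real.exp 0 := Real.exp_lt_exp.2 this
          _ = 1 := Real.exp_zero
      have : lam * E < mu := by nlinarith
      linarith
    · have hE1 : 1 < E := by
        rw [hE]
        have : 0 < (lam - mu) * t := mul_pos (by linarith) ht
        calc (1:ℝ) = Real.exp 0 := Real.exp_zero.symm
          _ < Real.exp ((lam - mu) * t) := Real.exp_lt_exp.2 this
      have : mu < lam * E := by nlinarith
      linarith
  have hβval : β = lam * (E - 1) / (lam * E - mu) := by
    rw [hβ, hα]; field_simp
  have h1β : (1 : ℝ) - β ≠ 0 := by linarith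
  have h1b : (1:ℝ) - β = (lam - mu) / (lam * E - mu) := by
    rw [hβval]; field_simp; ring
  have h1a : (1:ℝ) - α = E * (lam - mu) / (lam * E - mu) := by
    rw [hα, eq_div_iff hD, sub_mul, div_mul_cancel₀ _ hD]; ring
  rw [hS, hc, h1a, h1b, hβval, hα]
  have hD' : E * lam - mu ≠ 0 := by rwa [mul_comm]
  field_simp
  ring
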